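/- Let $m$ be a nonnegative integer, $\lambda \in \mathbb{C}\setminus\mathbb{Z}$, and $a_n = \binom{n+\lambda}{m}$. Let $d_n^{(k)} = \det(a_{i+j+k-2})_{1 \le i,j \le n}$. Then for every $k \ge 0$, $d_{m+1}^{(k)} = (-1)^{\binom{m+1}{2}}$. -/

import Mathlib

open Finset

/-- Generalized binomial coefficient `z choose m` for complex `z`. -/
noncomputable def cchoose (z : ℂ) (m : ℕ) : ℂ :=
  (∏ s ∈ Finset.range m, (z - s)) / (m.factorial : ℂ)

open Polynomial in
lemma descPochhammer_smeval_eq_prod' (z : ℂ) (n : ℕ) :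
    (descPochhammer ℤ n).smeval z = ∏ s ∈ Finset.range n, (z - s) := by
  induction n with
  | zero => simp
  | succ n ih =>
    rw [Finset.prod_range_succ, ← ih, descPochhammer_succ_right, smeval_mul, smeval_sub,
      smeval_X, smeval_natCast]
    simp

lemma cchoose_eq_ringChoose (z : ℂ) (n : ℕ) : cchoose z n = Ring.choose z n := by
  have h := Ring.descPochhammer_eq_factorial_smul_choose (R := ℂ) z n
  rw [descPochhammer_smeval_eq_prod'] at h
  rw [cchoose, h, nsmul_eq_mul]
  field_simp [Nat.factorial_ne_zero]

lemma descPochhammer_C_eval_eq_prod (z : ℂ) (n : ℕ) :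
    (descPochhammer ℂ n).eval z = ∏ s ∈ Finset.range n, (z - s) := by
  induction n with
  | zero => simp
  | succ n ih => rw [Finset.prod_range_succ, ← ih, descPochhammer_succ_eval]

lemma detA (m : ℕ) (c : ℂ) :
    (Matrix.of fun i t : Fin (m+1) => cchoose (((i:ℕ):ℂ) + c) (t:ℕ)).det = 1 := by
  have hA : (Matrix.of fun i t : Fin (m+1) => cchoose (((i:ℕ):ℂ) + c) (t:ℕ)) =
      Matrix.of fun i t : Fin (m+1) => (((t:ℕ).factorial : ℂ))⁻¹ *
        (descPochhammer ℂ (t:ℕ)).eval (((i:ℕ):ℂ) + c) := by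
    ext i t
    rw [Matrix.of_apply, Matrix.of_apply, cchoose, descPochhammer_C_eval_eq_prod,
      div_eq_inv_mul]
  rw [hA, Matrix.det_mul_row (fun t : Fin (m+1) => (((t:ℕ).factorial : ℂ))⁻¹)
    (fun i t : Fin (m+1) => (descPochhammer ℂ (t:ℕ)).eval (((i:ℕ):ℂ) + c))]
  rw [show (Matrix.det fun i t : Fin (m+1) => (descPochhammer ℂ (t:ℕ)).eval (((i:ℕ):ℂ) + c)) =
      (Matrix.of fun i t : Fin (m+1) => (descPochhammer ℂ (t:ℕ)).eval (((i:ℕ):ℂ) + c)).det from rfl,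
    ← Matrix.det_eval_matrixOfPolynomials_eq_det_vandermonde
      (fun i : Fin (m+1) => ((i:ℕ):ℂ) + c) (fun t => descPochhammer ℂ (t:ℕ))
      (fun t => descPochhammer_natDegree ℂ (t:ℕ)) (fun t => monic_descPochhammer ℂ (t:ℕ)),
    Matrix.det_vandermonde_add, Matrix.det_vandermonde_id_eq_superFactorial,
    Finset.prod_inv_distrib, ← Nat.cast_prod]
  rw [Fin.prod_univ_eq_prod_range (fun t => t.factorial) (m+1),
    Nat.prod_range_succ_factorial]
  rw [inv_mul_cancel₀]
  exact Nat.cast_ne_zero.mpr (by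
    rw [← Nat.prod_range_succ_factorial]
    exact Finset.prod_ne_zero_iff.mpr fun i _ => Nat.factorial_ne_zero i)

lemma detJ : ∀ n : ℕ, (Matrix.of fun i j : Fin (n+1) =>
    if (i:ℕ) + (j:ℕ) = n then (1:ℂ) else 0).det = (-1) ^ ((n+1).choose 2)
  | 0 => by simp
  | (n+1) => by
    rw [Matrix.det_succ_row_zero, Finset.sum_eq_single (Fin.last (n+1))]
    · have h1 : ((Matrix.of fun i j : Fin (n+2) =>
          if (i:ℕ) + (j:ℕ) = n+1 then (1:ℂ) else 0).submatrix Fin.succ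
          (Fin.last (n+1)).succAbove) =
          (Matrix.of fun i j : Fin (n+1) => if (i:ℕ) + (j:ℕ) = n then (1:ℂ) else 0) := by
        ext i j
        simp only [Matrix.submatrix_apply, Fin.succAbove_last, Matrix.of_apply, Fin.val_succ,
          Fin.coe_castSucc]
        exact if_congr (by omega) rfl rfl
      have h2 : (n+1+1).choose 2 = (n+1).choose 2 + (n+1) := by
        rw [Nat.choose_succ_succ]
        simp [Nat.choose_one_right]
        omega
      rw [h1, detJ n, h2, pow_add]
      simp [pow_succ, add_comm 1 n]
      ring
    · intro b _ hb
      have hb' : (b:ℕ) ≠ n+1 := by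
        intro h; exact hb (Fin.ext (by simp [h]))
      simp [hb']
    · simp

lemma detU (m : ℕ) :
    (Matrix.of fun t j : Fin (m+1) => (Nat.choose (j:ℕ) (t:ℕ) : ℂ)).det = 1 := by
  rw [Matrix.det_of_upperTriangular]
  · simp
  · intro t j h
    simp only [Matrix.of_apply, Nat.cast_eq_zero]
    exact Nat.choose_eq_zero_of_lt h

theorem stmt17 (m : ℕ) (lam : ℂ) (hlam : ∀ z : ℤ, lam ≠ z) (k : ℕ) :
    (Matrix.of fun i j : Fin (m + 1) =>
        cchoose ((((i : ℕ) + (j : ℕ) + k : ℕ) : ℂ) + lam) m).det =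
      (-1) ^ ((m + 1).choose 2) := by
  set A : Matrix (Fin (m+1)) (Fin (m+1)) ℂ :=
    Matrix.of fun i t : Fin (m+1) => cchoose (((i:ℕ):ℂ) + ((k:ℂ) + lam)) (t:ℕ) with hA
  set J : Matrix (Fin (m+1)) (Fin (m+1)) ℂ :=
    Matrix.of fun i j : Fin (m+1) => if (i:ℕ) + (j:ℕ) = m then (1:ℂ) else 0 with hJ
  set U : Matrix (Fin (m+1)) (Fin (m+1)) ℂ :=
    Matrix.of fun t j : Fin (m+1) => (Nat.choose (j:ℕ) (t:ℕ) : ℂ) with hU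
  have hB : ∀ t j : Fin (m+1), (J * U) t j = (Nat.choose (j:ℕ) (m - (t:ℕ)) : ℂ) := by
    intro t j
    rw [Matrix.mul_apply]
    rw [Finset.sum_eq_single (⟨m - (t:ℕ), by omega⟩ : Fin (m+1))]
    · have ht : (t:ℕ) + (m - (t:ℕ)) = m := by omega
      simp [hJ, hU, ht]
    · intro b _ hb
      have hb' : (t:ℕ) + (b:ℕ) ≠ m := by
        intro h
        apply hb
        apply Fin.ext
        simp only
        omega
      simp [hJ, hb']
    · simp
  have hM : (Matrix.of fun i j : Fin (m + 1) =>
      cchoose ((((i : ℕ) + (j : ℕ) + k : ℕ) : ℂ) + lam) m) = A * (J * U) := by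
    ext i j
    rw [Matrix.mul_apply]
    have harg : ((((i : ℕ) + (j : ℕ) + k : ℕ) : ℂ) + lam) =
        (((i:ℕ):ℂ) + ((k:ℂ) + lam)) + ((j:ℕ) : ℂ) := by push_cast; ring
    rw [Matrix.of_apply, harg, cchoose_eq_ringChoose,
      Ring.add_choose_eq m (Commute.all _ _),
      Finset.Nat.sum_antidiagonal_eq_sum_range_succ_mk, ← Fin.sum_univ_eq_sum_range
      (fun t => Ring.choose ((((i:ℕ):ℂ) + ((k:ℂ) + lam))) t *
        Ring.choose (((j:ℕ):ℂ)) (m - t)) (m+1)]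
    refine Finset.sum_congr rfl fun t _ => ?_
    rw [hB, hA, Matrix.of_apply, cchoose_eq_ringChoose, Ring.choose_natCast]
  rw [hM, Matrix.det_mul, Matrix.det_mul, hA, detA, hJ, detJ, hU, detU, one_mul, mul_one]
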